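/- Let Y be a compact convex subset of ℝ^m with diameter D_Y, fix x, and let h : ℝ^m → ℝ be concave, differentiable, with L-Lipschitz gradient on Y (L > 0), attaining its maximum over Y at y*. Given y ∈ Y, set H = h(y*) − h(y), let u ∈ argmin_{v ∈ Y} (−∇h(y))ᵀv and γ = min{ ∇h(y)ᵀ(u−y) / (L‖u−y‖²), 1 } (with γ = 1 if u = y), and y⁺ = y + γ(u − y). Then h(y*) − h(y⁺) ≤ max{ 1/2, 1 − H/(2 L D_Y²) } · H. -/

import Mathlib

open RealInnerProductSpace Classical

section aux
variable {m : ℕ}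

lemma fw_line_deriv (h : EuclideanSpace ℝ (Fin m) → ℝ)
    (g : EuclideanSpace ℝ (Fin m) → EuclideanSpace ℝ (Fin m))
    (hgrad : ∀ y, HasGradientAt h (g y) y)
    (y z : EuclideanSpace ℝ (Fin m)) (t : ℝ) :
    HasDerivAt (fun s : ℝ => h (y + s • (z - y))) ⟪g (y + t • (z - y)), z - y⟫ t := by
  have hc : HasDerivAt (fun s : ℝ => y + s • (z - y)) (z - y) t := by
    simpa using ((hasDerivAt_id t).smul_const (z - y)).const_add y
  have := ((hgrad (y + t • (z - y))).hasFDerivAt).comp_hasDerivAt t hc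
  simpa [InnerProductSpace.toDual_apply_apply, real_inner_comm, Function.comp_def] using this
end aux

section aux2
variable {m : ℕ}

lemma fw_concave_grad {Y : Set (EuclideanSpace ℝ (Fin m))}
    (h : EuclideanSpace ℝ (Fin m) → ℝ)
    (g : EuclideanSpace ℝ (Fin m) → EuclideanSpace ℝ (Fin m))
    (hgrad : ∀ y, HasGradientAt h (g y) y)
    (hconc : ConcaveOn ℝ Y h)
    {y z : EuclideanSpace ℝ (Fin m)} (hy : y ∈ Y) (hz : z ∈ Y) :
    h z - h y ≤ ⟪g y, z - y⟫ := by
  have hd : HasDerivAt (fun s : ℝ => h (y + s • (z - y))) ⟪g y, z - y⟫ 0 := by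
    simpa using fw_line_deriv h g hgrad y z 0
  have htend : Filter.Tendsto (slope (fun s : ℝ => h (y + s • (z - y))) 0)
      (nhdsWithin 0 (Set.Ioi 0)) (nhds ⟪g y, z - y⟫) :=
    (hasDerivAt_iff_tendsto_slope.mp hd).mono_left
      (nhdsWithin_mono _ (fun x hx => ne_of_gt hx))
  refine ge_of_tendsto htend ?_
  filter_upwards [Ioo_mem_nhdsGT_of_mem (by norm_num : (0:ℝ) ∈ Set.Ico 0 1)] with t ht
  have ht0 : 0 < t := ht.1
  have ht1 : t < 1 := ht.2
  have hcomb : h (y + t • (z - y)) ≥ (1 - t) * h y + t * h z := by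
    have := hconc.2 hy hz (by linarith : (0:ℝ) ≤ 1 - t) (le_of_lt ht0) (by ring)
    have heq : (1 - t) • y + t • z = y + t • (z - y) := by
      rw [smul_sub, sub_smul, one_smul]; abel
    rw [heq] at this
    simpa [smul_eq_mul] using this
  have : slope (fun s : ℝ => h (y + s • (z - y))) 0 t
      = (h (y + t • (z - y)) - h y) / t := by
    rw [slope_def_field]; simp
  rw [this, le_div_iff₀ ht0]
  nlinarith [hcomb]
end aux2

section aux3
variable {m : ℕ}

lemma fw_descent {Y : Set (EuclideanSpace ℝ (Fin m))} (hYconv : Convex ℝ Y)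
    (h : EuclideanSpace ℝ (Fin m) → ℝ)
    (g : EuclideanSpace ℝ (Fin m) → EuclideanSpace ℝ (Fin m))
    (hgrad : ∀ y, HasGradientAt h (g y) y)
    (L : ℝ) (hL : 0 < L)
    (hlip : ∀ a ∈ Y, ∀ b ∈ Y, ‖g a - g b‖ ≤ L * ‖a - b‖)
    {y u : EuclideanSpace ℝ (Fin m)} (hy : y ∈ Y) (hu : u ∈ Y)
    {t : ℝ} (ht0 : 0 ≤ t) (ht1 : t ≤ 1) :
    h y + t * ⟪g y, u - y⟫ - L / 2 * t ^ 2 * ‖u - y‖ ^ 2 ≤ h (y + t • (u - y)) := by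
  set G : ℝ := ⟪g y, u - y⟫ with hG
  set ψ : ℝ → ℝ := fun s => h (y + s • (u - y)) - s * G + L / 2 * s ^ 2 * ‖u - y‖ ^ 2
    with hψ
  have hmem : ∀ s : ℝ, 0 ≤ s → s ≤ 1 → y + s • (u - y) ∈ Y := by
    intro s h0 h1
    have heq : (1 - s) • y + s • u = y + s • (u - y) := by
      rw [smul_sub, sub_smul, one_smul]; abel
    rw [← heq]
    exact hYconv hy hu (by linarith) h0 (by ring)
  have hder : ∀ s : ℝ, HasDerivAt ψ
      (⟪g (y + s • (u - y)), u - y⟫ - G + L * s * ‖u - y‖ ^ 2) s := by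
    intro s
    have h1 := fw_line_deriv h g hgrad y u s
    have h2 : HasDerivAt (fun s : ℝ => s * G) G s := by
      simpa using (hasDerivAt_id s).mul_const G
    have h3 : HasDerivAt (fun s : ℝ => L / 2 * s ^ 2 * ‖u - y‖ ^ 2)
        (L * s * ‖u - y‖ ^ 2) s := by
      have := ((hasDerivAt_pow 2 s).const_mul (L / 2)).mul_const (‖u - y‖ ^ 2)
      refine this.congr_deriv ?_
      ring
    exact (h1.sub h2).add h3
  have hmono : MonotoneOn ψ (Set.Icc 0 t) := by
    apply monotoneOn_of_deriv_nonneg (convex_Icc 0 t)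
    · exact fun s _ => ((hder s).continuousAt).continuousWithinAt
    · intro s hs
      exact ((hder s).differentiableAt).differentiableWithinAt
    · intro s hs
      rw [interior_Icc] at hs
      rw [(hder s).deriv]
      have hs0 : 0 ≤ s := le_of_lt hs.1
      have hs1 : s ≤ 1 := le_trans (le_of_lt hs.2) ht1
      have hcs : y + s • (u - y) ∈ Y := hmem s hs0 hs1
      have hinner : ⟪g (y + s • (u - y)), u - y⟫ - G
          = ⟪g (y + s • (u - y)) - g y, u - y⟫ := by
        rw [inner_sub_left]
      have hlb : -(‖g (y + s • (u - y)) - g y‖ * ‖u - y‖)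
          ≤ ⟪g (y + s • (u - y)) - g y, u - y⟫ :=
        neg_le_of_abs_le (abs_real_inner_le_norm _ _)
      have hlip' : ‖g (y + s • (u - y)) - g y‖ ≤ L * ‖y + s • (u - y) - y‖ :=
        hlip _ hcs _ hy
      have hnorm : ‖y + s • (u - y) - y‖ = s * ‖u - y‖ := by
        simp [norm_smul, abs_of_nonneg hs0]
      rw [hnorm] at hlip'
      rw [hinner]
      nlinarith [norm_nonneg (u - y), norm_nonneg (g (y + s • (u - y)) - g y)]
  have := hmono (Set.left_mem_Icc.mpr ht0) (Set.right_mem_Icc.mpr ht0) ht0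
  simp only [hψ, zero_smul, add_zero, zero_mul, sub_zero, ne_eq, OfNat.ofNat_ne_zero,
    not_false_eq_true, zero_pow, mul_zero] at this
  linarith [this]
end aux3

/-- One-step contraction of Frank–Wolfe with closed-loop stepsize for concave
maximization of an `L`-smooth function over a compact convex set:
`h(y*) − h(y⁺) ≤ max{1/2, 1 − H/(2LD_Y²)}·H` where `H = h(y*) − h(y)`. -/
theorem fw_one_step_contraction (m : ℕ)
    (Y : Set (EuclideanSpace ℝ (Fin m)))
    (hYne : Y.Nonempty) (hYcomp : IsCompact Y) (hYconv : Convex ℝ Y)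
    (DY : ℝ) (hD : ∀ u ∈ Y, ∀ v ∈ Y, ‖u - v‖ ≤ DY)
    (h : EuclideanSpace ℝ (Fin m) → ℝ)
    (g : EuclideanSpace ℝ (Fin m) → EuclideanSpace ℝ (Fin m))
    (hgrad : ∀ y, HasGradientAt h (g y) y)
    (hconc : ConcaveOn ℝ Y h)
    (L : ℝ) (hL : 0 < L)
    (hlip : ∀ a ∈ Y, ∀ b ∈ Y, ‖g a - g b‖ ≤ L * ‖a - b‖)
    (ystar : EuclideanSpace ℝ (Fin m)) (hystar : ystar ∈ Y)
    (hmax : ∀ y' ∈ Y, h y' ≤ h ystar)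
    (y : EuclideanSpace ℝ (Fin m)) (hy : y ∈ Y)
    (u : EuclideanSpace ℝ (Fin m)) (hu : u ∈ Y)
    (hulmo : ∀ v ∈ Y, ⟪g y, v⟫ ≤ ⟪g y, u⟫)
    (γ : ℝ)
    (hγ : γ = if u = y then 1 else min (⟪g y, u - y⟫ / (L * ‖u - y‖ ^ 2)) 1) :
    h ystar - h (y + γ • (u - y)) ≤
      max (1 / 2) (1 - (h ystar - h y) / (2 * L * DY ^ 2)) * (h ystar - h y) := by
  have hH0 : 0 ≤ h ystar - h y := sub_nonneg.mpr (hmax y hy)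
  have hHG : h ystar - h y ≤ ⟪g y, u - y⟫ := by
    have h1 := fw_concave_grad h g hgrad hconc hy hystar
    have h2 : ⟪g y, ystar - y⟫ ≤ ⟪g y, u - y⟫ := by
      rw [inner_sub_right, inner_sub_right]
      linarith [hulmo ystar hystar]
    linarith
  by_cases hcase : u = y
  · have hz : u - y = 0 := by rw [hcase, sub_self]
    have hHz : h ystar - h y = 0 := le_antisymm (by simpa [hz] using hHG) hH0
    have hpt : y + γ • (u - y) = y := by rw [hz, smul_zero, add_zero]
    rw [hpt, hHz]
    simp
  · subst hγ
    rw [if_neg hcase]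
    set G : ℝ := ⟪g y, u - y⟫ with hGdef
    have hn : 0 < ‖u - y‖ := norm_pos_iff.mpr (sub_ne_zero.mpr hcase)
    have hN : 0 < L * ‖u - y‖ ^ 2 := by positivity
    have hDYn : ‖u - y‖ ≤ DY := hD u hu y hy
    have hDY0 : 0 < DY := lt_of_lt_of_le hn hDYn
    have hG0 : 0 ≤ G := le_trans hH0 hHG
    have hγ0 : 0 ≤ min (G / (L * ‖u - y‖ ^ 2)) 1 :=
      le_min (div_nonneg hG0 hN.le) zero_le_one
    have hγ1 : min (G / (L * ‖u - y‖ ^ 2)) 1 ≤ 1 := min_le_right _ _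
    have descent := fw_descent hYconv h g hgrad L hL hlip hy hu hγ0 hγ1
    set t : ℝ := min (G / (L * ‖u - y‖ ^ 2)) 1 with htdef
    rcases le_or_gt (G / (L * ‖u - y‖ ^ 2)) 1 with hle | hlt
    · -- short step: t = G / (L‖u-y‖²)
      have ht : t = G / (L * ‖u - y‖ ^ 2) := min_eq_left hle
      have hval : t * G - L / 2 * t ^ 2 * ‖u - y‖ ^ 2
          = G ^ 2 / (2 * (L * ‖u - y‖ ^ 2)) := by
        rw [ht]; field_simp; ring
      have hH2G2 : (h ystar - h y) ^ 2 ≤ G ^ 2 := by nlinarith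
      have hbound : (h ystar - h y) ^ 2 / (2 * L * DY ^ 2)
          ≤ G ^ 2 / (2 * (L * ‖u - y‖ ^ 2)) := by
        apply div_le_div₀ (sq_nonneg G) hH2G2 (by positivity)
        have h1 : ‖u - y‖ ^ 2 ≤ DY ^ 2 := by nlinarith
        nlinarith [mul_nonneg hL.le (sub_nonneg.mpr h1)]
      have hfin : h ystar - h (y + t • (u - y))
          ≤ h ystar - h y - (h ystar - h y) ^ 2 / (2 * L * DY ^ 2) := by
        nlinarith [descent]
      have heq : h ystar - h y - (h ystar - h y) ^ 2 / (2 * L * DY ^ 2)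
          = (1 - (h ystar - h y) / (2 * L * DY ^ 2)) * (h ystar - h y) := by
        field_simp
      calc h ystar - h (y + t • (u - y))
          ≤ (1 - (h ystar - h y) / (2 * L * DY ^ 2)) * (h ystar - h y) := by
            rw [← heq]; exact hfin
        _ ≤ max (1 / 2) (1 - (h ystar - h y) / (2 * L * DY ^ 2)) * (h ystar - h y) :=
            mul_le_mul_of_nonneg_right (le_max_right _ _) hH0
    · -- full step: t = 1
      have ht : t = 1 := min_eq_right hlt.le
      have hNG : L * ‖u - y‖ ^ 2 < G := by
        have := (lt_div_iff₀ hN).mp hlt; linarith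
      have hfin : h ystar - h (y + t • (u - y)) ≤ 1 / 2 * (h ystar - h y) := by
        rw [ht] at descent ⊢
        nlinarith [descent]
      calc h ystar - h (y + t • (u - y)) ≤ 1 / 2 * (h ystar - h y) := hfin
        _ ≤ max (1 / 2) (1 - (h ystar - h y) / (2 * L * DY ^ 2)) * (h ystar - h y) :=
            mul_le_mul_of_nonneg_right (le_max_left _ _) hH0
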